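/- arXiv:2303.04860 — 2 statements merged into one kernel-verified Lean document; each statement's English description precedes it below -/
import Mathlib

section
/- Let Γ be an abelian group and k ≥ 1. On the set X := SML_0(Γ,ℝ/ℤ) × SML_1(Γ,ℝ/ℤ) × ⋯ × SML_k(Γ,ℝ/ℤ) of tuples (b_i)_{i=0}^k with b_i a symmetric multilinear map Γ^i → ℝ/ℤ, define for γ ∈ Γ the map T^γ : X → X by T^γ((b_i)_{i=0}^k) := ( ∑_{j=0}^{k−i} C(k−i, j)·b_{i+j}(γ^{×j}, ·) )_{i=0}^k, where b_{i+j}(γ^{×j}, ·) ∈ SML_i(Γ,ℝ/ℤ) is the partial evaluation of b_{i+j} with γ placed in j of its slots. Then T^γ ∘ T^{γ'} = T^{γ+γ'} for all γ, γ' ∈ Γ and T^0 = id, so T defines an action of Γ on X. -/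
/-- `b : Γ^m → H` is multilinear if it is a group homomorphism in each coordinate. -/
def IsMultilinear {Γ H : Type*} [AddCommGroup Γ] [AddCommGroup H] {m : ℕ}
    (b : (Fin m → Γ) → H) : Prop :=
  ∀ (i : Fin m) (g : Fin m → Γ) (x y : Γ),
    b (Function.update g i (x + y)) = b (Function.update g i x) + b (Function.update g i y)

/-- `b : Γ^m → H` is symmetric if it is invariant under all permutations of its arguments. -/
def IsSymmetric {Γ H : Type*} {m : ℕ} (b : (Fin m → Γ) → H) : Prop :=
  ∀ (σ : Equiv.Perm (Fin m)) (g : Fin m → Γ), b (g ∘ σ) = b g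

/-- The shift `T^γ` on tuples `(b_i)_{i=0}^k` of maps `b_i : Γ^i → ℝ/ℤ`:
`T^γ((b_i)_i) = (∑_{j=0}^{k−i} C(k−i, j) • b_{i+j}(γ^{×j}, ·))_i`, where
`b_{i+j}(γ^{×j}, ·)` denotes partial evaluation of `b_{i+j}` with `γ` placed in `j`
of its slots.  (The sum is written over all indices `l = i + j` with `i ≤ l ≤ k`.) -/
noncomputable def Tact {Γ : Type*} [AddCommGroup Γ] (k : ℕ) (γ : Γ)
    (b : ∀ i : Fin (k + 1), (Fin (i : ℕ) → Γ) → AddCircle (1 : ℝ)) :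
    ∀ i : Fin (k + 1), (Fin (i : ℕ) → Γ) → AddCircle (1 : ℝ) :=
  fun i => ∑ l : Fin (k + 1),
    if h : (i : ℕ) ≤ (l : ℕ) then
      ((k - (i : ℕ)).choose ((l : ℕ) - (i : ℕ))) •
        fun g : Fin (i : ℕ) → Γ =>
          b l (fun t => Fin.append (fun _ : Fin ((l : ℕ) - (i : ℕ)) => γ) g
                (Fin.cast (Nat.sub_add_cancel h).symm t))
    else 0


set_option linter.unusedSectionVars false
set_option linter.unnecessarySeqFocus false
set_option linter.unreachableTactic false
set_option linter.unusedTactic false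

namespace TactHelpers

variable {Γ H : Type*} [AddCommGroup Γ] [AddCommGroup H]


/-- extend a finite tuple to `ℕ → Γ` by zero -/
def gext {i : ℕ} (g : Fin i → Γ) : ℕ → Γ := fun n => if h : n < i then g ⟨n, h⟩ else 0

/-- block vector: `p` copies of `u`, `q` copies of `v`, `r` copies of `w`, then tail `g`. -/
def blkv (u v w : Γ) (p q r : ℕ) (g : ℕ → Γ) {m : ℕ} : Fin m → Γ :=
  fun t => if t.val < p then u else if t.val < p + q then v
    else if t.val < p + q + r then w else g (t.val - (p + q + r))

lemma ml_zero {m : ℕ} {b : (Fin m → Γ) → H} (hm : IsMultilinear b)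
    (f : Fin m → Γ) (j : Fin m) (hj : f j = 0) : b f = 0 := by
  have h := hm j f 0 0
  rw [add_zero] at h
  rw [show Function.update f j (0:Γ) = f by rw [← hj, Function.update_eq_self]] at h
  exact left_eq_add.mp h

noncomputable def mkPerm {m : ℕ} (f : Fin m → Fin m) (hf : Function.Injective f) : Equiv.Perm (Fin m) :=
  Equiv.ofBijective f (Finite.injective_iff_bijective.mp hf)

@[simp] lemma mkPerm_apply {m : ℕ} (f : Fin m → Fin m) (hf) (t : Fin m) :
    mkPerm f hf t = f t := rfl

def swapFun (o p q : ℕ) {m : ℕ} (h : o + p + q ≤ m) (t : Fin m) : Fin m :=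
  ⟨if t.val < o then t.val else if t.val < o + q then t.val + p
     else if t.val < o + p + q then t.val - q else t.val, by
    have := t.isLt; split_ifs <;> omega⟩

lemma swapFun_inj (o p q : ℕ) {m : ℕ} (h : o + p + q ≤ m) :
    Function.Injective (swapFun o p q h) := by
  intro a b hab
  have hab' := congrArg Fin.val hab
  simp only [swapFun] at hab'
  have ha := a.isLt; have hb := b.isLt
  apply Fin.ext
  split_ifs at hab' <;> omega

noncomputable def swapPerm (o p q : ℕ) {m : ℕ} (h : o + p + q ≤ m) : Equiv.Perm (Fin m) :=
  mkPerm (swapFun o p q h) (swapFun_inj o p q h)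

def padFun (s : ℕ) {i m : ℕ} (σ : Equiv.Perm (Fin i)) (h : s + i = m) (t : Fin m) : Fin m :=
  if h' : t.val < s then t
  else ⟨s + (σ ⟨t.val - s, by have := t.isLt; omega⟩).val, by
    have := (σ ⟨t.val - s, by have := t.isLt; omega⟩).isLt; omega⟩

lemma padFun_inj (s : ℕ) {i m : ℕ} (σ : Equiv.Perm (Fin i)) (h : s + i = m) :
    Function.Injective (padFun s σ h) := by
  intro a b hab
  unfold padFun at hab
  split_ifs at hab with h1 h2 h2
  · exact hab
  · exfalso; have := congrArg Fin.val hab; simp at this; omega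
  · exfalso; have := congrArg Fin.val hab; simp at this; omega
  · have := congrArg Fin.val hab
    simp only at this
    have h3 : (σ ⟨a.val - s, by have := a.isLt; omega⟩) = (σ ⟨b.val - s, by have := b.isLt; omega⟩) :=
      Fin.ext (by omega)
    have h4 := σ.injective h3
    have h5 := congrArg Fin.val h4
    simp only at h5
    apply Fin.ext; omega

noncomputable def padPerm (s : ℕ) {i m : ℕ} (σ : Equiv.Perm (Fin i)) (h : s + i = m) : Equiv.Perm (Fin m) :=
  mkPerm (padFun s σ h) (padFun_inj s σ h)


/-- the `Fin.append` expression occurring in `Tact` is a `blkv`. -/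
lemma append_eq_blkv {a i l : ℕ} (h : a + i = l) (γ : Γ) (g : Fin i → Γ) :
    (fun t : Fin l => Fin.append (fun _ : Fin a => γ) g (Fin.cast h.symm t))
      = blkv γ γ γ a 0 0 (gext g) := by
  funext t
  rcases lt_or_ge t.val a with ht | ht
  · have : Fin.cast h.symm t = Fin.castAdd i ⟨t.val, ht⟩ := Fin.ext rfl
    rw [this, Fin.append_left]
    simp only [blkv, if_pos ht]
  · have hti : t.val - a < i := by have := t.isLt; omega
    have : Fin.cast h.symm t = Fin.natAdd a ⟨t.val - a, hti⟩ := Fin.ext (by simp; omega)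
    rw [this, Fin.append_right]
    simp only [blkv, gext, Nat.add_zero]
    split_ifs <;> first | rfl | contradiction | (exfalso; omega)

/-- nested blkv's combine -/
lemma blkv_nest {a c i lv m : ℕ} (hl : c + i = lv) (hm : a + lv = m) (x y : Γ) (g : Fin i → Γ) :
    (blkv x x x a 0 0 (gext (blkv y y y c 0 0 (gext g) : Fin lv → Γ)) : Fin m → Γ)
      = blkv x y x a c 0 (gext g) := by
  funext t
  have htm := t.isLt
  simp only [blkv, gext, Nat.add_zero]
  split_ifs <;> first | rfl | contradiction | (exfalso; omega) | (congr 1 <;> simp only [Fin.mk.injEq] <;> omega)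

/-- with empty second and third blocks, their values are irrelevant -/
lemma blkv_vw0 (u v w v' w' : Γ) (p : ℕ) (g : ℕ → Γ) {m : ℕ} :
    (blkv u v w p 0 0 g : Fin m → Γ) = blkv u v' w' p 0 0 g := by
  funext t
  simp only [blkv, Nat.add_zero]
  split_ifs <;> rfl

/-- with empty third block, its value is irrelevant -/
lemma blkv_w0 (u v w w' : Γ) (p q : ℕ) (g : ℕ → Γ) {m : ℕ} :
    (blkv u v w p q 0 g : Fin m → Γ) = blkv u v w' p q 0 g := by
  funext t
  simp only [blkv, Nat.add_zero]
  split_ifs <;> first | rfl | omega | (exfalso; omega)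

/-- drop an empty leading block -/
lemma blkv_p0 (u v w z : Γ) (q r : ℕ) (g : ℕ → Γ) {m : ℕ} :
    (blkv u v w 0 q r g : Fin m → Γ) = blkv v w z q r 0 g := by
  funext t
  simp only [blkv, Nat.zero_add, Nat.add_zero]
  split_ifs <;> first | rfl | contradiction | (exfalso; omega) | (congr 1 <;> simp only [Fin.mk.injEq] <;> omega)


lemma blkv_swap {mv : ℕ} {b : (Fin mv → Γ) → H} (hs : IsSymmetric b) (u v w w' : Γ)
    (p q : ℕ) (h : p + q ≤ mv) (g : ℕ → Γ) :
    b (blkv u v w p q 0 g) = b (blkv v u w' q p 0 g) := by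
  have key : (blkv v u w' q p 0 g : Fin mv → Γ)
      = (blkv u v w p q 0 g : Fin mv → Γ) ∘ (swapPerm 0 p q (by omega)) := by
    funext t
    simp only [Function.comp_apply, swapPerm, mkPerm_apply, swapFun, blkv, Nat.add_zero,
      Nat.zero_add]
    split_ifs <;> first | rfl | contradiction | (exfalso; omega) | (congr 1 <;> omega)
  rw [key, hs]

lemma blkv_perm (u v w : Γ) (p q r : ℕ) {i mv : ℕ} (h : p + q + r + i = mv)
    (g : Fin i → Γ) (σ : Equiv.Perm (Fin i)) :
    (blkv u v w p q r (gext (g ∘ σ)) : Fin mv → Γ)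
      = (blkv u v w p q r (gext g) : Fin mv → Γ) ∘ (padPerm (p + q + r) σ h) := by
  funext t
  have htm := t.isLt
  simp only [Function.comp_apply, padPerm, mkPerm_apply, padFun, blkv, gext]
  rcases Nat.lt_or_ge t.val (p + q + r) with h' | h'
  · split_ifs <;> (try simp only [Fin.val_mk] at *) <;> first | rfl | contradiction | (exfalso; omega)
  · have hσ := (σ ⟨t.val - (p + q + r), by omega⟩).isLt
    split_ifs <;> (try simp only [Fin.val_mk] at *) <;>
      first
        | rfl
        | (exfalso; omega)
        | (congr 1; apply Fin.ext; simp only [Fin.val_mk]; omega)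

lemma blkv_update (u v w : Γ) (p q r : ℕ) {i mv : ℕ} (h : p + q + r + i = mv)
    (g : Fin i → Γ) (j : Fin i) (z : Γ) :
    (blkv u v w p q r (gext (Function.update g j z)) : Fin mv → Γ)
      = Function.update (blkv u v w p q r (gext g))
          ⟨p + q + r + j.val, by have := j.isLt; omega⟩ z := by
  funext t
  have htm := t.isLt
  have hj := j.isLt
  simp only [blkv, gext, Function.update_apply, Fin.ext_iff]
  split_ifs <;> first | rfl | contradiction | (exfalso; omega) | (congr 1 <;> simp only [Fin.mk.injEq] <;> omega)

lemma Tact_apply {k : ℕ} (γ : Γ) (b : ∀ i : Fin (k + 1), (Fin (i : ℕ) → Γ) → AddCircle (1 : ℝ))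
    (i : Fin (k + 1)) (g : Fin (i : ℕ) → Γ) :
    Tact k γ b i g = ∑ l : Fin (k + 1),
      (if (i : ℕ) ≤ (l : ℕ) then
        ((k - (i : ℕ)).choose ((l : ℕ) - (i : ℕ))) •
          b l (blkv γ γ γ ((l : ℕ) - (i : ℕ)) 0 0 (gext g)) else 0) := by
  simp only [Tact]
  rw [Finset.sum_apply]
  refine Finset.sum_congr rfl fun l _ => ?_
  by_cases h : (i : ℕ) ≤ (l : ℕ)
  · rw [dif_pos h, if_pos h, Pi.smul_apply]
    exact congrArg (fun z => ((k - (i:ℕ)).choose ((l:ℕ) - (i:ℕ))) • b l z)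
      (append_eq_blkv (Nat.sub_add_cancel h) γ g)
  · rw [dif_neg h, if_neg h, Pi.zero_apply]

set_option maxHeartbeats 1600000 in
lemma binom {mv : ℕ} {b : (Fin mv → Γ) → H} (hm : IsMultilinear b) (hs : IsSymmetric b)
    (x y : Γ) (g : ℕ → Γ) :
    ∀ c r q : ℕ, c + r + q ≤ mv →
      b (blkv (x + y) x y c r q g) =
        ∑ p ∈ Finset.range (c + 1),
          (c.choose p) • b (blkv (x + y) x y 0 (p + r) (q + (c - p)) g) := by
  intro c
  induction c with
  | zero =>
    intro r q _
    rw [Finset.sum_range_one]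
    norm_num
  | succ c ih =>
    intro r q hle
    have h0m : 0 < mv := by omega
    set F := (blkv (x + y) x y (c + 1) r q g : Fin mv → Γ) with hF
    have hF0 : F ⟨0, h0m⟩ = x + y := by simp [hF, blkv]
    have hupd : Function.update F ⟨0, h0m⟩ (x + y) = F := by
      rw [← hF0]; exact Function.update_eq_self _ F
    have hexp := hm ⟨0, h0m⟩ F x y
    rw [hupd] at hexp
    have hx : b (Function.update F ⟨0, h0m⟩ x) = b (blkv (x + y) x y c (r + 1) q g) := by
      have key : (blkv (x + y) x y c (r + 1) q g : Fin mv → Γ)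
          = Function.update F ⟨0, h0m⟩ x ∘ (swapPerm 0 1 c (by omega)) := by
        funext t
        have htm := t.isLt
        simp only [Function.comp_apply, swapPerm, mkPerm_apply, swapFun, hF, blkv,
          Function.update_apply, Fin.ext_iff, Fin.val_mk]
        split_ifs <;> first | rfl | contradiction | (exfalso; omega) | (congr 1 <;> omega)
      rw [key, hs]
    have hy : b (Function.update F ⟨0, h0m⟩ y) = b (blkv (x + y) x y c r (q + 1) g) := by
      have key : (blkv (x + y) x y c r (q + 1) g : Fin mv → Γ)
          = Function.update F ⟨0, h0m⟩ y ∘ (swapPerm 0 1 (c + r) (by omega)) := by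
        funext t
        have htm := t.isLt
        simp only [Function.comp_apply, swapPerm, mkPerm_apply, swapFun, hF, blkv,
          Function.update_apply, Fin.ext_iff, Fin.val_mk]
        split_ifs <;> first | rfl | contradiction | (exfalso; omega) | (congr 1 <;> omega)
      rw [key, hs]
    have key : ∀ (f : ℕ → H), ∑ p ∈ Finset.range (c + 2), (c + 1).choose p • f p
        = ∑ p ∈ Finset.range (c + 1), c.choose p • f (p + 1)
          + ∑ p ∈ Finset.range (c + 1), c.choose p • f p := by
      intro f
      rw [Finset.sum_range_succ' (fun p => (c + 1).choose p • f p) (c + 1)]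
      simp only [Nat.choose_succ_succ, add_smul, Nat.choose_zero_right, one_smul]
      rw [Finset.sum_add_distrib]
      have hlast : ∑ p ∈ Finset.range (c + 1), c.choose (p + 1) • f (p + 1) + f 0
          = ∑ p ∈ Finset.range (c + 1), c.choose p • f p := by
        have h0 : f 0 = c.choose 0 • f 0 := by simp
        rw [h0, ← Finset.sum_range_succ' (fun p => c.choose p • f p) (c + 1),
          Finset.sum_range_succ]
        simp
      rw [add_assoc, hlast]
    rw [hexp, hx, hy, ih (r + 1) q (by omega), ih r (q + 1) (by omega),
      key (fun n => b (blkv (x + y) x y 0 (n + r) (q + (c + 1 - n)) g))]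
    congr 1
    · refine Finset.sum_congr rfl fun p hp => ?_
      have hpc : p ≤ c := Nat.lt_succ_iff.mp (Finset.mem_range.mp hp)
      rw [show p + (r + 1) = p + 1 + r by omega, show q + (c - p) = q + (c + 1 - (p + 1)) by omega]
    · refine Finset.sum_congr rfl fun p hp => ?_
      have hpc : p ≤ c := Nat.lt_succ_iff.mp (Finset.mem_range.mp hp)
      rw [show q + 1 + (c - p) = q + (c + 1 - p) by omega]

lemma sum_fin_shift {M : Type*} [AddCommMonoid M] (k i mm : ℕ) (him : i ≤ mm) (hmk : mm ≤ k)
    (f : ℕ → M) :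
    (∑ l : Fin (k + 1), if i ≤ (l : ℕ) ∧ (l : ℕ) ≤ mm then f (l : ℕ) else 0)
      = ∑ p ∈ Finset.range (mm - i + 1), f (i + p) := by
  rw [Fin.sum_univ_eq_sum_range (fun n => if i ≤ n ∧ n ≤ mm then f n else 0) (k + 1)]
  have h1 : ∀ n, (if i ≤ n ∧ n ≤ mm then f n else 0)
      = (if n ∈ Finset.Icc i mm then f n else 0) := by
    intro n; simp [Finset.mem_Icc]
  simp only [h1]
  have hsub : Finset.Icc i mm ⊆ Finset.range (k + 1) := by
    intro n hn
    rw [Finset.mem_Icc] at hn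
    exact Finset.mem_range.mpr (by omega)
  rw [Finset.sum_ite_mem, Finset.inter_eq_right.mpr hsub, ← Finset.Ico_add_one_right_eq_Icc,
    Finset.sum_Ico_eq_sum_range, show mm + 1 - i = mm - i + 1 by omega]

end TactHelpers

open TactHelpers in
/-- On the space `X = SML_0(Γ,ℝ/ℤ) × ⋯ × SML_k(Γ,ℝ/ℤ)` of tuples of symmetric
multilinear maps, the maps `T^γ` preserve `X` and satisfy `T^γ ∘ T^{γ'} = T^{γ+γ'}` and
`T^0 = id`, so `T` defines an action of `Γ` on `X`. -/
theorem Tact_is_action {Γ : Type*} [AddCommGroup Γ] (k : ℕ) (hk : 1 ≤ k)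
    (b : ∀ i : Fin (k + 1), (Fin (i : ℕ) → Γ) → AddCircle (1 : ℝ))
    (hb : ∀ i : Fin (k + 1), IsMultilinear (b i) ∧ IsSymmetric (b i)) :
    (∀ (γ : Γ) (i : Fin (k + 1)),
        IsMultilinear (Tact k γ b i) ∧ IsSymmetric (Tact k γ b i)) ∧
    (∀ γ γ' : Γ, Tact k γ (Tact k γ' b) = Tact k (γ + γ') b) ∧
    Tact k (0 : Γ) b = b := by
  refine ⟨?_, ?_, ?_⟩
  · -- preservation of multilinearity and symmetry
    intro γ i
    constructor
    · intro j g x y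
      rw [Tact_apply, Tact_apply, Tact_apply, ← Finset.sum_add_distrib]
      refine Finset.sum_congr rfl fun l _ => ?_
      by_cases h : (i : ℕ) ≤ (l : ℕ)
      · rw [if_pos h, if_pos h, if_pos h]
        have hsum : ((l : ℕ) - (i : ℕ)) + 0 + 0 + (i : ℕ) = (l : ℕ) := by omega
        rw [blkv_update γ γ γ _ 0 0 hsum g j (x + y),
            blkv_update γ γ γ _ 0 0 hsum g j x,
            blkv_update γ γ γ _ 0 0 hsum g j y,
            (hb l).1, smul_add]
      · rw [if_neg h, if_neg h, if_neg h, add_zero]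
    · intro σ g
      rw [Tact_apply, Tact_apply]
      refine Finset.sum_congr rfl fun l _ => ?_
      by_cases h : (i : ℕ) ≤ (l : ℕ)
      · rw [if_pos h, if_pos h]
        have hsum : ((l : ℕ) - (i : ℕ)) + 0 + 0 + (i : ℕ) = (l : ℕ) := by omega
        rw [blkv_perm γ γ γ _ 0 0 hsum g σ, (hb l).2]
      · rw [if_neg h, if_neg h]
  · -- composition law
    intro γ γ'
    funext i g
    rw [Tact_apply]
    have step1 : ∀ l : Fin (k + 1),
        (if (i : ℕ) ≤ (l : ℕ) then
            ((k - (i : ℕ)).choose ((l : ℕ) - (i : ℕ))) •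
              (Tact k γ' b l (blkv γ γ γ ((l : ℕ) - (i : ℕ)) 0 0 (gext g)))
          else 0)
        = ∑ m : Fin (k + 1),
            (if (i : ℕ) ≤ (l : ℕ) ∧ (l : ℕ) ≤ (m : ℕ) then
              (((k - (i : ℕ)).choose ((l : ℕ) - (i : ℕ)))
                  * ((k - (l : ℕ)).choose ((m : ℕ) - (l : ℕ)))) •
                b m (blkv γ γ' γ ((l : ℕ) - (i : ℕ)) ((m : ℕ) - (l : ℕ)) 0 (gext g))
            else 0) := by
      intro l
      by_cases h : (i : ℕ) ≤ (l : ℕ)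
      · rw [if_pos h, Tact_apply, Finset.smul_sum]
        refine Finset.sum_congr rfl fun m _ => ?_
        by_cases hlm : (l : ℕ) ≤ (m : ℕ)
        · rw [if_pos hlm, if_pos ⟨h, hlm⟩, smul_smul]
          congr 1
          rw [blkv_nest (Nat.sub_add_cancel h) (Nat.sub_add_cancel hlm) γ' γ g]
          exact blkv_swap (hb m).2 γ' γ γ' γ _ _ (by omega) _
        · rw [if_neg hlm, smul_zero, if_neg (fun hc => hlm hc.2)]
      · rw [if_neg h]
        exact (Finset.sum_eq_zero fun m _ => if_neg (fun hc => h hc.1)).symm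
    rw [Finset.sum_congr rfl fun l _ => step1 l, Finset.sum_comm, Tact_apply]
    refine Finset.sum_congr rfl fun m _ => ?_
    by_cases him : (i : ℕ) ≤ (m : ℕ)
    · rw [if_pos him]
      have hmk : (m : ℕ) ≤ k := Nat.lt_succ_iff.mp m.isLt
      rw [blkv_vw0 (γ + γ') (γ + γ') (γ + γ') γ γ' ((m : ℕ) - (i : ℕ)) (gext g),
        binom (hb m).1 (hb m).2 γ γ' (gext g) ((m : ℕ) - (i : ℕ)) 0 0 (by omega),
        Finset.smul_sum]
      rw [sum_fin_shift k (i : ℕ) (m : ℕ) him (by omega) (fun n =>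
        (((k - (i : ℕ)).choose (n - (i : ℕ))) * ((k - n).choose ((m : ℕ) - n))) •
          b m (blkv γ γ' γ (n - (i : ℕ)) ((m : ℕ) - n) 0 (gext g)))]
      refine Finset.sum_congr rfl fun p hp => ?_
      have hpm : p ≤ (m : ℕ) - (i : ℕ) := Nat.lt_succ_iff.mp (Finset.mem_range.mp hp)
      rw [smul_smul, show (i : ℕ) + p - (i : ℕ) = p by omega,
        blkv_p0 (γ + γ') γ γ' γ (p + 0) (0 + ((m : ℕ) - (i : ℕ) - p)) (gext g),
        show p + 0 = p by omega,
        show 0 + ((m : ℕ) - (i : ℕ) - p) = (m : ℕ) - ((i : ℕ) + p) by omega]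
      congr 1
      have hcm := Nat.choose_mul (n := k - (i : ℕ))
        (show p ≤ (m : ℕ) - (i : ℕ) by omega)
      rw [show k - ((i : ℕ) + p) = k - (i : ℕ) - p by omega,
        show (m : ℕ) - ((i : ℕ) + p) = (m : ℕ) - (i : ℕ) - p by omega, hcm]
    · rw [if_neg him]
      exact Finset.sum_eq_zero fun l _ => if_neg (fun hc => him (le_trans hc.1 hc.2))
  · -- `T^0 = id`
    funext i g
    rw [Tact_apply]
    refine (Finset.sum_eq_single i ?_ ?_).trans ?_
    · intro l _ hne
      by_cases h : (i : ℕ) ≤ (l : ℕ)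
      · rw [if_pos h]
        have hlv : 0 < (l : ℕ) - (i : ℕ) := by
          have : (l : ℕ) ≠ (i : ℕ) := fun hc => hne (Fin.ext hc)
          omega
        have h0l : 0 < (l : ℕ) := by omega
        have hz : b l (blkv (0 : Γ) 0 0 ((l : ℕ) - (i : ℕ)) 0 0 (gext g)) = 0 :=
          ml_zero (hb l).1 _ ⟨0, h0l⟩ (by
            simp only [blkv, Fin.val_mk]
            rw [if_pos hlv])
        rw [hz, smul_zero]
      · rw [if_neg h]
    · intro habs; exact absurd (Finset.mem_univ i) habs
    · rw [if_pos (le_refl _), Nat.sub_self, Nat.choose_zero_right, one_smul]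
      refine congrArg (b i) ?_
      funext t
      have htl := t.isLt
      simp only [blkv, gext]
      split_ifs <;>
        first
          | (exfalso; omega)
          | (exact congrArg g (Fin.ext (by simp only [Fin.val_mk]; omega)))
end

section
/- Let Γ be an abelian group, k ≥ 1, and let X := SML_0(Γ,ℝ/ℤ) × SML_1(Γ,ℝ/ℤ) × ⋯ × SML_k(Γ,ℝ/ℤ) with the Γ-action T^γ((b_i)_{i=0}^k) := ( ∑_{j=0}^{k−i} C(k−i, j)·b_{i+j}(γ^{×j}, ·) )_{i=0}^k. Let P : X → ℝ/ℤ be the evaluation of the first coordinate, P((b_i)_{i=0}^k) := b_0. Then for every point x = (b_i)_{i=0}^k ∈ X and all γ_1,…,γ_k ∈ Γ one has ∂_{γ_1}⋯∂_{γ_k} P(x) = k!·b_k(γ_1,…,γ_k), where ∂_γ P := P ∘ T^γ − P; in particular, since the top coordinate b_k is fixed by the action, ∂_{γ_1}⋯∂_{γ_{k+1}} P = 0 for all γ_1,…,γ_{k+1} ∈ Γ. -/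
/-- The derivative along a map: `∂_S f (x) = f(S x) - f(x)`. -/
def actDeriv {X M : Type*} [AddCommGroup M] (S : X → X) (f : X → M) : X → M :=
  fun x => f (S x) - f x

/-- Iterated derivative `∂_{γ_1} ⋯ ∂_{γ_j} f` with respect to an action `T` of `Γ` on `X`. -/
def actDerivIter {Γ X M : Type*} [AddCommGroup M] (T : Γ → X → X) :
    (j : ℕ) → (Fin j → Γ) → (X → M) → (X → M)
  | 0, _, f => f
  | j + 1, γ, f => actDerivIter T j (fun i => γ i.succ) (actDeriv (T (γ 0)) f)

/-- Evaluation of the first coordinate `P((b_i)_{i=0}^k) = b_0`. -/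
noncomputable def evalZero {Γ : Type*} [AddCommGroup Γ] (k : ℕ)
    (b : ∀ i : Fin (k + 1), (Fin (i : ℕ) → Γ) → AddCircle (1 : ℝ)) : AddCircle (1 : ℝ) :=
  b ⟨0, Nat.succ_pos k⟩ Fin.elim0


-- auxiliary lemmas

lemma actDeriv_add {X M : Type*} [AddCommGroup M] (S : X → X) (f g : X → M) :
    actDeriv S (f + g) = actDeriv S f + actDeriv S g := by
  funext x; simp [actDeriv]; abel

lemma actDeriv_zero {X M : Type*} [AddCommGroup M] (S : X → X) :
    actDeriv S (0 : X → M) = 0 := by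
  funext x; simp [actDeriv]

lemma actDeriv_nsmul {X M : Type*} [AddCommGroup M] (S : X → X) (n : ℕ) (f : X → M) :
    actDeriv S (n • f) = n • actDeriv S f := by
  funext x; simp [actDeriv, smul_sub]

lemma actDerivIter_add {Γ X M : Type*} [AddCommGroup M] (T : Γ → X → X) :
    ∀ (j : ℕ) (γ : Fin j → Γ) (f g : X → M),
      actDerivIter T j γ (f + g) = actDerivIter T j γ f + actDerivIter T j γ g
  | 0, _, _, _ => rfl
  | j+1, γ, f, g => by
      simp only [actDerivIter, actDeriv_add]
      exact actDerivIter_add T j _ _ _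

lemma actDerivIter_zero {Γ X M : Type*} [AddCommGroup M] (T : Γ → X → X) :
    ∀ (j : ℕ) (γ : Fin j → Γ), actDerivIter T j γ (0 : X → M) = 0
  | 0, _ => rfl
  | j+1, γ => by
      simp only [actDerivIter, actDeriv_zero]
      exact actDerivIter_zero T j _

lemma actDerivIter_nsmul {Γ X M : Type*} [AddCommGroup M] (T : Γ → X → X) :
    ∀ (j : ℕ) (γ : Fin j → Γ) (n : ℕ) (f : X → M),
      actDerivIter T j γ (n • f) = n • actDerivIter T j γ f
  | 0, _, _, _ => rfl
  | j+1, γ, n, f => by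
      simp only [actDerivIter, actDeriv_nsmul]
      exact actDerivIter_nsmul T j _ _ _

lemma actDerivIter_sum {Γ X M ι : Type*} [AddCommGroup M] (T : Γ → X → X)
    (j : ℕ) (γ : Fin j → Γ) (s : Finset ι) (F : ι → X → M) :
    actDerivIter T j γ (∑ i ∈ s, F i) = ∑ i ∈ s, actDerivIter T j γ (F i) := by
  classical
  induction s using Finset.induction_on with
  | empty => simp [actDerivIter_zero]
  | insert _ _ h ih => simp [Finset.sum_insert h, actDerivIter_add, ih]

lemma append_cast_eval {α : Type*} {m n N : ℕ} (e : N = m + n) (u : Fin m → α) (v : Fin n → α)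
    (t : Fin N) :
    Fin.append u v (Fin.cast e t) =
      if h : (t : ℕ) < m then u ⟨t, h⟩ else v ⟨(t : ℕ) - m, by omega⟩ := by
  rcases lt_or_ge (t : ℕ) m with h | h
  · rw [dif_pos h]
    have : Fin.cast e t = Fin.castAdd n ⟨t, h⟩ := by ext; simp
    rw [this, Fin.append_left]
  · rw [dif_neg (not_lt.2 h)]
    have : Fin.cast e t = Fin.natAdd m ⟨(t : ℕ) - m, by omega⟩ := by
      ext; simp; omega
    rw [this, Fin.append_right]

lemma Tact_apply {Γ : Type*} [AddCommGroup Γ] (k : ℕ) (γ : Γ)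
    (b : ∀ i : Fin (k + 1), (Fin (i : ℕ) → Γ) → AddCircle (1 : ℝ))
    (i : Fin (k + 1)) (g : Fin (i : ℕ) → Γ) :
    Tact k γ b i g = ∑ l : Fin (k + 1),
      if h : (i : ℕ) ≤ (l : ℕ) then
        ((k - (i : ℕ)).choose ((l : ℕ) - (i : ℕ))) •
          b l (fun t => Fin.append (fun _ : Fin ((l : ℕ) - (i : ℕ)) => γ) g
                (Fin.cast (Nat.sub_add_cancel h).symm t))
      else 0 := by
  simp [Tact, Finset.sum_apply, dite_apply]

lemma step {Γ : Type*} [AddCommGroup Γ] (k : ℕ) (γ0 : Γ) (l : ℕ) (hl : l < k + 1)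
    (g : Fin l → Γ) :
    actDeriv (Tact k γ0)
        (fun b' : ∀ i : Fin (k + 1), (Fin (i : ℕ) → Γ) → AddCircle (1 : ℝ) => b' ⟨l, hl⟩ g) =
      ∑ l' : Fin (k + 1),
        if h : l < (l' : ℕ) then
          ((k - l).choose ((l' : ℕ) - l)) •
            (fun b' : ∀ i : Fin (k + 1), (Fin (i : ℕ) → Γ) → AddCircle (1 : ℝ) =>
              b' l' (fun t => Fin.append (fun _ : Fin ((l' : ℕ) - l) => γ0) g
                (Fin.cast (Nat.sub_add_cancel h.le).symm t)))
        else 0 := by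
  funext b'
  show Tact k γ0 b' ⟨l, hl⟩ g - b' ⟨l, hl⟩ g = _
  rw [Tact_apply]
  have key : ∀ l' : Fin (k + 1),
      (if h : l ≤ (l' : ℕ) then
        ((k - l).choose ((l' : ℕ) - l)) •
          b' l' (fun t => Fin.append (fun _ : Fin ((l' : ℕ) - l) => γ0) g
            (Fin.cast (Nat.sub_add_cancel h).symm t))
      else 0)
      = (if h : l < (l' : ℕ) then
          ((k - l).choose ((l' : ℕ) - l)) •
            b' l' (fun t => Fin.append (fun _ : Fin ((l' : ℕ) - l) => γ0) g
              (Fin.cast (Nat.sub_add_cancel h.le).symm t))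
        else 0)
        + (if l' = ⟨l, hl⟩ then b' ⟨l, hl⟩ g else 0) := by
    intro l'
    rcases eq_or_ne l' ⟨l, hl⟩ with rfl | hne
    · rw [dif_pos (le_refl l), dif_neg (lt_irrefl l), if_pos rfl, zero_add]
      simp only [Nat.sub_self, Nat.choose_zero_right, one_smul]
      congr 1
      funext t
      rw [append_cast_eval]
      rw [dif_neg (by omega : ¬ (t : ℕ) < l - l)]
      congr 1
      ext; simp
    · rw [if_neg hne, add_zero]
      rcases lt_or_ge l (l' : ℕ) with h | h
      · rw [dif_pos h.le, dif_pos h]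
      · have hlt : ¬ l ≤ (l' : ℕ) := by
          intro hle
          exact hne (Fin.ext (by simp only [Fin.val_mk]; omega))
        rw [dif_neg hlt, dif_neg (fun hcon : l < (l' : ℕ) => hlt hcon.le)]
  calc (∑ l' : Fin (k+1), if h : l ≤ (l' : ℕ) then
        ((k - l).choose ((l' : ℕ) - l)) •
          b' l' (fun t => Fin.append (fun _ : Fin ((l' : ℕ) - l) => γ0) g
            (Fin.cast (Nat.sub_add_cancel h).symm t)) else 0) - b' ⟨l, hl⟩ g
      = ((∑ l' : Fin (k+1), if h : l < (l' : ℕ) then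
          ((k - l).choose ((l' : ℕ) - l)) •
            b' l' (fun t => Fin.append (fun _ : Fin ((l' : ℕ) - l) => γ0) g
              (Fin.cast (Nat.sub_add_cancel h.le).symm t)) else 0)
          + ∑ l' : Fin (k+1), (if l' = ⟨l, hl⟩ then b' ⟨l, hl⟩ g else 0)) - b' ⟨l, hl⟩ g := by
        rw [← Finset.sum_add_distrib, Finset.sum_congr rfl (fun l' _ => key l')]
    _ = _ := by
        rw [Finset.sum_ite_eq' Finset.univ (⟨l, hl⟩ : Fin (k+1))
          (fun _ => b' ⟨l, hl⟩ g), if_pos (Finset.mem_univ _), add_sub_cancel_right]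
        simp [Finset.sum_apply, dite_apply]

lemma step' {Γ : Type*} [AddCommGroup Γ] (k : ℕ) (γ0 : Γ) (l : Fin (k + 1))
    (g : Fin (l : ℕ) → Γ) :
    actDeriv (Tact k γ0)
        (fun b' : ∀ i : Fin (k + 1), (Fin (i : ℕ) → Γ) → AddCircle (1 : ℝ) => b' l g) =
      ∑ l' : Fin (k + 1),
        if h : (l : ℕ) < (l' : ℕ) then
          ((k - (l : ℕ)).choose ((l' : ℕ) - (l : ℕ))) •
            (fun b' : ∀ i : Fin (k + 1), (Fin (i : ℕ) → Γ) → AddCircle (1 : ℝ) =>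
              b' l' (fun t => Fin.append (fun _ : Fin ((l' : ℕ) - (l : ℕ)) => γ0) g
                (Fin.cast (Nat.sub_add_cancel h.le).symm t)))
        else 0 := by
  obtain ⟨lv, hlv⟩ := l
  exact step k γ0 lv hlv g

lemma vanish {Γ : Type*} [AddCommGroup Γ] (k : ℕ)
    (b : ∀ i : Fin (k + 1), (Fin (i : ℕ) → Γ) → AddCircle (1 : ℝ)) :
    ∀ (j : ℕ) (l : Fin (k + 1)), k < (l : ℕ) + j →
      ∀ (γ : Fin j → Γ) (g : Fin (l : ℕ) → Γ),
        actDerivIter (fun γ0 => Tact k γ0) j γ (fun b' => b' l g) b = 0 := by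
  intro j
  induction j with
  | zero => intro l hkl γ g; exact absurd hkl (by have := l.isLt; omega)
  | succ j ih =>
    intro l hkl γ g
    show actDerivIter (fun γ0 => Tact k γ0) j (fun i => γ i.succ)
      (actDeriv (Tact k (γ 0)) (fun b' => b' l g)) b = 0
    rw [step', actDerivIter_sum, Finset.sum_apply]
    refine Finset.sum_eq_zero fun l' _ => ?_
    by_cases h : (l : ℕ) < (l' : ℕ)
    · rw [dif_pos h, actDerivIter_nsmul, Pi.smul_apply, ih l' (by omega) _ _, smul_zero]
    · rw [dif_neg h, actDerivIter_zero, Pi.zero_apply]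

lemma main {Γ : Type*} [AddCommGroup Γ] (k : ℕ)
    (b : ∀ i : Fin (k + 1), (Fin (i : ℕ) → Γ) → AddCircle (1 : ℝ)) :
    ∀ (j : ℕ) (l : Fin (k + 1)) (hlj : (l : ℕ) + j = k) (γ : Fin j → Γ)
      (g : Fin (l : ℕ) → Γ),
      actDerivIter (fun γ0 => Tact k γ0) j γ (fun b' => b' l g) b =
        (k - (l : ℕ)).factorial • b ⟨k, Nat.lt_succ_self k⟩
          (fun t : Fin k =>
            if h : (t : ℕ) < j then γ ⟨j - 1 - (t : ℕ), by omega⟩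
            else g ⟨(t : ℕ) - j, by have := t.isLt; omega⟩) := by
  intro j
  induction j with
  | zero =>
    intro l hlj γ g
    obtain ⟨lv, hlv⟩ := l
    simp only [Fin.val_mk] at hlj ⊢
    have hlv2 : k = lv := by omega
    subst hlv2
    simp only [Nat.sub_self, Nat.factorial_zero, one_smul]
    show b ⟨k, hlv⟩ g = _
    exact congrArg (b ⟨k, hlv⟩) (funext fun t => by
      rw [dif_neg (by omega : ¬ (t : ℕ) < 0)]
      exact congrArg g (Fin.ext (by simp)))
  | succ j ih =>
    intro l hlj γ g
    show actDerivIter (fun γ0 => Tact k γ0) j (fun i => γ i.succ)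
      (actDeriv (Tact k (γ 0)) (fun b' => b' l g)) b = _
    rw [step', actDerivIter_sum, Finset.sum_apply]
    have hlt : (l : ℕ) + 1 < k + 1 := by omega
    rw [Finset.sum_eq_single (⟨(l : ℕ) + 1, hlt⟩ : Fin (k + 1))]
    · have h1 : (l : ℕ) < ((⟨(l : ℕ) + 1, hlt⟩ : Fin (k + 1)) : ℕ) := by
        simp only [Fin.val_mk]; omega
      rw [dif_pos h1, actDerivIter_nsmul, Pi.smul_apply,
        ih ⟨(l : ℕ) + 1, hlt⟩ (by simp only [Fin.val_mk]; omega) (fun i => γ i.succ) _,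
        smul_smul]
      have hc : (k - (l : ℕ)).choose (((⟨(l : ℕ) + 1, hlt⟩ : Fin (k + 1)) : ℕ) - (l : ℕ)) *
          (k - ((⟨(l : ℕ) + 1, hlt⟩ : Fin (k + 1)) : ℕ)).factorial
          = (k - (l : ℕ)).factorial := by
        simp only [Fin.val_mk]
        have e1 : (l : ℕ) + 1 - (l : ℕ) = 1 := by omega
        have e2 : k - (l : ℕ) = (k - ((l : ℕ) + 1)) + 1 := by omega
        rw [e1, Nat.choose_one_right, e2, Nat.factorial_succ]
      rw [hc]
      refine congrArg (fun v => (k - (l : ℕ)).factorial • b ⟨k, Nat.lt_succ_self k⟩ v) (funext fun t => ?_)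
      rcases lt_trichotomy (t : ℕ) j with ht | ht | ht
      · rw [dif_pos ht, dif_pos (by omega : (t : ℕ) < j + 1)]
        show γ (Fin.succ _) = _
        congr 1
        ext
        simp only [Fin.val_succ, Fin.val_mk]
        omega
      · rw [dif_neg (by omega : ¬ (t : ℕ) < j), dif_pos (by omega : (t : ℕ) < j + 1)]
        rw [append_cast_eval]
        rw [dif_pos (by simp only [Fin.val_mk]; omega)]
        congr 1
        ext
        simp only [Fin.val_mk, Fin.val_zero]
        omega
      · rw [dif_neg (by omega : ¬ (t : ℕ) < j), dif_neg (by omega : ¬ (t : ℕ) < j + 1)]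
        rw [append_cast_eval]
        rw [dif_neg (by simp only [Fin.val_mk]; omega)]
        congr 1
        ext
        simp only [Fin.val_mk]
        omega
    · intro l' _ hne
      by_cases h : (l : ℕ) < (l' : ℕ)
      · have hv : (l' : ℕ) ≠ (l : ℕ) + 1 := fun hc => hne (Fin.ext (by simp [hc]))
        rw [dif_pos h, actDerivIter_nsmul, Pi.smul_apply,
          vanish k b j l' (by omega) _ _, smul_zero]
      · rw [dif_neg h, actDerivIter_zero, Pi.zero_apply]
    · intro hmem
      exact absurd (Finset.mem_univ _) hmem

/-- On the space of tuples `(b_i)_{i=0}^k` of symmetric multilinear maps with the action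
`T`, the evaluation `P((b_i)_i) = b_0` of the first coordinate satisfies
`∂_{γ_1}⋯∂_{γ_k} P (x) = k! • b_k(γ_1,…,γ_k)` at every symmetric multilinear tuple `x`,
and in particular `∂_{γ_1}⋯∂_{γ_{k+1}} P = 0`. -/
theorem evalZero_deriv {Γ : Type*} [AddCommGroup Γ] (k : ℕ) (hk : 1 ≤ k)
    (b : ∀ i : Fin (k + 1), (Fin (i : ℕ) → Γ) → AddCircle (1 : ℝ))
    (hb : ∀ i : Fin (k + 1), IsMultilinear (b i) ∧ IsSymmetric (b i)) :
    (∀ γ : Fin k → Γ,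
        actDerivIter (fun γ0 => Tact k γ0) k γ (evalZero k) b =
          k.factorial • b ⟨k, Nat.lt_succ_self k⟩ γ) ∧
    (∀ γ : Fin (k + 1) → Γ,
        actDerivIter (fun γ0 => Tact k γ0) (k + 1) γ (evalZero k) b = 0) := by
  constructor
  · intro γ
    have h := main k b k ⟨0, Nat.succ_pos k⟩ (Nat.zero_add k) γ Fin.elim0
    refine h.trans ?_
    rw [← (hb ⟨k, Nat.lt_succ_self k⟩).2 Fin.revPerm γ]
    refine congrArg (fun v => k.factorial • b ⟨k, Nat.lt_succ_self k⟩ v) (funext fun t => ?_)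
    rw [dif_pos t.isLt]
    exact congrArg γ (Fin.ext (by
      simp only [Fin.val_mk, Function.comp, Fin.revPerm_apply, Fin.val_rev]
      omega))
  · intro γ
    exact vanish k b (k + 1) ⟨0, Nat.succ_pos k⟩ (by omega) γ Fin.elim0
end
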